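/- Let h = a·r₁ + b·r₂ where r₁ is the rank function of U^{123}_{2,3} and r₂ that of U_{1,4} on N_4, with a, b ≥ 0. Then h is entropic if and only if b > 0 (with any a ≥ 0), or b = 0 and a = log k for some positive integer k. -/

import Mathlib

open Finset

/-- Probability that the discrete random variable `Y` (on finite sample space `Ω`
with pmf `p`) takes the value `s`. -/
noncomputable def pr {Ω : Type} [Fintype Ω] {S : Type} [DecidableEq S]
    (p : Ω → ℝ) (Y : Ω → S) (s : S) : ℝ := ∑ ω, if Y ω = s then p ω else 0

/-- Shannon entropy (base 2) of the discrete random variable `Y`. -/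
noncomputable def ent {Ω : Type} [Fintype Ω] {S : Type} [DecidableEq S]
    (p : Ω → ℝ) (Y : Ω → S) : ℝ :=
  - ∑ s ∈ Finset.univ.image Y, pr p Y s * Real.logb 2 (pr p Y s)

/-- `h : 2^{N_n} → ℝ` is entropic: it is the entropy function of some random
vector `(X_1, …, X_n)` on finite alphabets. -/
def IsEntropic (n : ℕ) (h : Finset (Fin n) → ℝ) : Prop :=
  ∃ (m : Fin n → ℕ) (p : (∀ i, Fin (m i)) → ℝ),
    (∀ x, 0 ≤ p x) ∧ (∑ x, p x) = 1 ∧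
    ∀ A : Finset (Fin n), h A = ent p (fun x (i : A) => x i.1)

/-- Rank function of the matroid U^{B}_{k,|B|} on N₄ = {0,1,2,3}:
A ↦ min(k, |A ∩ B|); elements outside B are loops. -/
noncomputable def rkU (k : ℕ) (B : Finset (Fin 4)) (A : Finset (Fin 4)) : ℝ :=
  min (k : ℝ) ((A ∩ B).card : ℝ)

section Basic
variable {Ω : Type} [Fintype Ω] {S T : Type} [DecidableEq S] [DecidableEq T]
  (p : Ω → ℝ) (Y : Ω → S) (Z : Ω → T)

lemma pr_nonneg (hp : ∀ ω, 0 ≤ p ω) (s : S) : 0 ≤ pr p Y s := by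
  unfold pr; exact Finset.sum_nonneg fun ω _ => by split <;> simp [hp ω]

lemma pr_eq_zero_of_not_mem {s : S} (h : s ∉ Finset.univ.image Y) : pr p Y s = 0 := by
  unfold pr
  refine Finset.sum_eq_zero fun ω _ => ?_
  have : Y ω ≠ s := fun he => h (by rw [← he]; exact Finset.mem_image_of_mem Y (mem_univ ω))
  simp [this]

lemma sum_pr [Fintype S] : ∑ s, pr p Y s = ∑ ω, p ω := by
  unfold pr
  rw [Finset.sum_comm]
  refine Finset.sum_congr rfl fun ω _ => ?_
  rw [Finset.sum_ite_eq Finset.univ (Y ω) (fun _ => p ω)]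
  simp

lemma sum_pr_image : ∑ s ∈ Finset.univ.image Y, pr p Y s = ∑ ω, p ω := by
  unfold pr
  rw [Finset.sum_comm (s := Finset.univ.image Y) (t := (Finset.univ : Finset Ω))
      (f := fun s ω => if Y ω = s then p ω else 0)]
  refine Finset.sum_congr rfl fun ω _ => ?_
  simp

lemma ent_eq_sum_univ [Fintype S] :
    ent p Y = - ∑ s, pr p Y s * Real.logb 2 (pr p Y s) := by
  unfold ent
  have : ∑ s ∈ Finset.univ.image Y, pr p Y s * Real.logb 2 (pr p Y s)
      = ∑ s, pr p Y s * Real.logb 2 (pr p Y s) := by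
    refine Finset.sum_subset (Finset.subset_univ (Finset.univ.image Y)) fun s _ hs => ?_
    rw [pr_eq_zero_of_not_mem p Y hs]; simp
  rw [this]

lemma pr_comp (f : S → T) [Fintype S] (t : T) :
    pr p (fun ω => f (Y ω)) t = ∑ s, if f s = t then pr p Y s else 0 := by
  have hterm : ∀ s : S, (if f s = t then pr p Y s else 0)
      = ∑ ω, if Y ω = s then (if f s = t then p ω else 0) else 0 := by
    intro s
    by_cases hs : f s = t
    · simp only [hs, if_true]; rfl
    · simp [hs]
  simp only [hterm]
  rw [Finset.sum_comm]
  unfold pr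
  refine Finset.sum_congr rfl fun ω _ => ?_
  simp

lemma pr_congr {s : S} {t : T} (h : ∀ ω, Y ω = s ↔ Z ω = t) : pr p Y s = pr p Z t := by
  unfold pr
  refine Finset.sum_congr rfl fun ω _ => ?_
  by_cases hy : Y ω = s
  · simp [hy, (h ω).1 hy]
  · have hz : ¬ Z ω = t := fun hz => hy ((h ω).2 hz)
    simp [hy, hz]

lemma ent_congr (f : S → T) (g : T → S) (hf : ∀ ω, f (Y ω) = Z ω)
    (hg : ∀ ω, g (Z ω) = Y ω) : ent p Y = ent p Z := by
  have hgf : ∀ ω, g (f (Y ω)) = Y ω := fun ω => by rw [hf ω, hg ω]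
  have himg : Finset.univ.image Z = (Finset.univ.image Y).image f := by
    ext t
    simp only [Finset.mem_image, Finset.mem_univ, true_and]
    constructor
    · rintro ⟨ω, rfl⟩; exact ⟨Y ω, ⟨ω, rfl⟩, hf ω⟩
    · rintro ⟨s, ⟨ω, rfl⟩, rfl⟩; exact ⟨ω, by rw [hf ω]⟩
  have hinj : Set.InjOn f (Finset.univ.image Y : Set S) := by
    intro s hs s' hs' hss
    simp only [Finset.coe_image, Finset.coe_univ, Set.image_univ, Set.mem_range] at hs hs'
    obtain ⟨ω, rfl⟩ := hs; obtain ⟨ω', rfl⟩ := hs'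
    rw [← hgf ω, ← hgf ω', hss]
  have hpr : ∀ ω₀ : Ω, pr p Y (Y ω₀) = pr p Z (f (Y ω₀)) := by
    intro ω₀
    refine pr_congr p Y Z fun ω => ⟨fun hy => by rw [← hf ω, hy], fun hz => ?_⟩
    rw [← hgf ω, hf ω, hz, hgf ω₀]
  unfold ent
  rw [himg, Finset.sum_image (fun s hs s' hs' h => hinj (by simpa using hs) (by simpa using hs') h)]
  congr 1
  refine Finset.sum_congr rfl fun s hs => ?_
  simp only [Finset.mem_image, Finset.mem_univ, true_and] at hs
  obtain ⟨ω, rfl⟩ := hs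
  rw [hpr ω]

end Basic
section Info

open Real in
/-- Gibbs' inequality, equality version. -/
lemma kl_eq {ι : Type} [Fintype ι] (u v : ι → ℝ) (hu : ∀ i, 0 ≤ u i) (hv : ∀ i, 0 ≤ v i)
    (hu1 : ∑ i, u i = 1) (hv1 : ∑ i, v i = 1) (hs : ∀ i, u i ≠ 0 → v i ≠ 0)
    (hent : ∑ i, u i * Real.logb 2 (u i) = ∑ i, u i * Real.logb 2 (v i)) :
    ∀ i, u i = v i := by
  have key : ∀ i, u i * (Real.log (v i) - Real.log (u i)) ≤ v i - u i := by
    intro i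
    rcases eq_or_lt_of_le (hu i) with h0 | h0
    · simp [← h0, hv i]
    · have hvpos : 0 < v i := lt_of_le_of_ne (hv i) (Ne.symm (hs i (ne_of_gt h0)))
      have hx : 0 < v i / u i := div_pos hvpos h0
      have := Real.log_le_sub_one_of_pos hx
      rw [Real.log_div (ne_of_gt hvpos) (ne_of_gt h0)] at this
      calc u i * (Real.log (v i) - Real.log (u i)) ≤ u i * (v i / u i - 1) := by
            exact mul_le_mul_of_nonneg_left this (le_of_lt h0)
        _ = v i - u i := by field_simp
  have hsum : ∑ i, u i * (Real.log (v i) - Real.log (u i)) = ∑ i, (v i - u i) := by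
    have hlog2 : (Real.log 2) ≠ 0 := by
      have : (1:ℝ) < 2 := one_lt_two
      positivity
    have h1 : ∑ i, u i * (Real.log (v i) - Real.log (u i))
        = (∑ i, u i * Real.logb 2 (v i) - ∑ i, u i * Real.logb 2 (u i)) * Real.log 2 := by
      rw [← Finset.sum_sub_distrib, Finset.sum_mul]
      refine Finset.sum_congr rfl fun i _ => ?_
      unfold Real.logb
      field_simp
    rw [h1, ← hent, Finset.sum_sub_distrib, hu1, hv1]
    simp
  have heach := (Finset.sum_eq_sum_iff_of_le (fun i _ => key i)).1 hsum
  intro i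
  have hi := heach i (Finset.mem_univ i)
  rcases eq_or_lt_of_le (hu i) with h0 | h0
  · -- u i = 0
    rw [← h0] at hi ⊢
    simp at hi
    linarith
  · have hvpos : 0 < v i := lt_of_le_of_ne (hv i) (Ne.symm (hs i (ne_of_gt h0)))
    by_contra hne
    have hx : 0 < v i / u i := div_pos hvpos h0
    have hxne : v i / u i ≠ 1 := by
      intro h1
      exact hne ((div_eq_one_iff_eq (ne_of_gt h0)).1 h1).symm
    have hlt := Real.log_lt_sub_one_of_pos hx hxne
    rw [Real.log_div (ne_of_gt hvpos) (ne_of_gt h0)] at hlt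
    have : u i * (Real.log (v i) - Real.log (u i)) < v i - u i := by
      calc u i * (Real.log (v i) - Real.log (u i)) < u i * (v i / u i - 1) :=
            (mul_lt_mul_iff_right₀ h0).2 hlt
        _ = v i - u i := by field_simp
    rw [hi] at this
    exact lt_irrefl _ this

variable {Ω : Type} [Fintype Ω] {S₁ S₂ : Type} [DecidableEq S₁] [DecidableEq S₂]
  [Fintype S₁] [Fintype S₂]

lemma pr_fst (p : Ω → ℝ) (Y : Ω → S₁ × S₂) (s : S₁) :
    pr p (fun ω => (Y ω).1) s = ∑ t, pr p Y (s, t) := by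
  have := pr_comp p Y Prod.fst s
  rw [this, Fintype.sum_prod_type,
    Finset.sum_eq_single_of_mem s (Finset.mem_univ s) (fun s' _ h => by simp [h])]
  simp

lemma pr_snd (p : Ω → ℝ) (Y : Ω → S₁ × S₂) (t : S₂) :
    pr p (fun ω => (Y ω).2) t = ∑ s, pr p Y (s, t) := by
  have := pr_comp p Y Prod.snd t
  rw [this, Fintype.sum_prod_type_right,
    Finset.sum_eq_single_of_mem t (Finset.mem_univ t) (fun t' _ h => by simp [h])]
  simp

/-- From H(X,Y) = H(X) + H(Y) deduce independence. -/
lemma indep_of_ent_eq (p : Ω → ℝ) (hp : ∀ ω, 0 ≤ p ω) (hp1 : ∑ ω, p ω = 1)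
    (Y : Ω → S₁ × S₂)
    (hent : ent p Y = ent p (fun ω => (Y ω).1) + ent p (fun ω => (Y ω).2)) :
    ∀ st : S₁ × S₂, pr p Y st = pr p (fun ω => (Y ω).1) st.1 * pr p (fun ω => (Y ω).2) st.2 := by
  set j := pr p Y with hj
  set m₁ := pr p (fun ω => (Y ω).1) with hm₁
  set m₂ := pr p (fun ω => (Y ω).2) with hm₂
  have hjnn : ∀ st, 0 ≤ j st := pr_nonneg p Y hp
  have hm₁nn : ∀ s, 0 ≤ m₁ s := pr_nonneg p _ hp
  have hm₂nn : ∀ t, 0 ≤ m₂ t := pr_nonneg p _ hp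
  have hj1 : ∑ st, j st = 1 := by rw [hj, sum_pr, hp1]
  have hm₁1 : ∑ s, m₁ s = 1 := by rw [hm₁, sum_pr, hp1]
  have hm₂1 : ∑ t, m₂ t = 1 := by rw [hm₂, sum_pr, hp1]
  have hle1 : ∀ s t, j (s, t) ≤ m₁ s := by
    intro s t
    rw [hm₁, pr_fst]
    exact Finset.single_le_sum (fun t' _ => hjnn (s, t')) (Finset.mem_univ t)
  have hle2 : ∀ s t, j (s, t) ≤ m₂ t := by
    intro s t
    rw [hm₂, pr_snd]
    exact Finset.single_le_sum (fun s' _ => hjnn (s', t)) (Finset.mem_univ s)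
  -- entropies as sums over univ
  have e1 : ent p (fun ω => (Y ω).1) = - ∑ st : S₁ × S₂, j st * Real.logb 2 (m₁ st.1) := by
    rw [ent_eq_sum_univ]
    congr 1
    rw [Fintype.sum_prod_type]
    refine Finset.sum_congr rfl fun s _ => ?_
    rw [← hm₁]
    have : m₁ s * Real.logb 2 (m₁ s) = (∑ t, j (s, t)) * Real.logb 2 (m₁ s) := by
      rw [← pr_fst p Y s]
    rw [this, Finset.sum_mul]
  have e2 : ent p (fun ω => (Y ω).2) = - ∑ st : S₁ × S₂, j st * Real.logb 2 (m₂ st.2) := by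
    rw [ent_eq_sum_univ]
    congr 1
    rw [Fintype.sum_prod_type_right]
    refine Finset.sum_congr rfl fun t _ => ?_
    rw [← hm₂]
    have : m₂ t * Real.logb 2 (m₂ t) = (∑ s, j (s, t)) * Real.logb 2 (m₂ t) := by
      rw [← pr_snd p Y t]
    rw [this, Finset.sum_mul]
  have e0 : ent p Y = - ∑ st : S₁ × S₂, j st * Real.logb 2 (j st) := by
    rw [ent_eq_sum_univ]
  have hkey : ∑ st : S₁ × S₂, j st * Real.logb 2 (j st)
      = ∑ st : S₁ × S₂, j st * Real.logb 2 (m₁ st.1 * m₂ st.2) := by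
    have := hent
    rw [e0, e1, e2] at this
    have h' : ∑ st : S₁ × S₂, j st * Real.logb 2 (j st)
        = ∑ st : S₁ × S₂, (j st * Real.logb 2 (m₁ st.1) + j st * Real.logb 2 (m₂ st.2)) := by
      rw [Finset.sum_add_distrib]
      linarith [this]
    rw [h']
    refine Finset.sum_congr rfl fun st _ => ?_
    rcases eq_or_ne (j st) 0 with h0 | h0
    · simp [h0]
    · have h1 : m₁ st.1 ≠ 0 := fun h => h0 (le_antisymm (h ▸ hle1 st.1 st.2) (hjnn st))
      have h2 : m₂ st.2 ≠ 0 := fun h => h0 (le_antisymm (h ▸ hle2 st.1 st.2) (hjnn st))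
      rw [Real.logb_mul h1 h2]
      ring
  have := kl_eq j (fun st => m₁ st.1 * m₂ st.2) hjnn
    (fun st => mul_nonneg (hm₁nn st.1) (hm₂nn st.2)) hj1
    (by rw [Fintype.sum_prod_type, ← hm₁1]
        refine Finset.sum_congr rfl fun s _ => ?_
        show (∑ y, m₁ s * m₂ y) = m₁ s
        rw [← Finset.mul_sum, hm₂1, mul_one])
    (fun st h0 => mul_ne_zero
      (fun h => h0 (le_antisymm (h ▸ hle1 st.1 st.2) (hjnn st)))
      (fun h => h0 (le_antisymm (h ▸ hle2 st.1 st.2) (hjnn st))))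
    hkey
  exact this

/-- From H(X,Y) = H(X) deduce that X determines Y on the support. -/
lemma det_of_ent_eq (p : Ω → ℝ) (hp : ∀ ω, 0 ≤ p ω)
    (Y : Ω → S₁ × S₂)
    (hent : ent p Y = ent p (fun ω => (Y ω).1)) :
    ∀ s t t', pr p Y (s, t) ≠ 0 → pr p Y (s, t') ≠ 0 → t = t' := by
  set j := pr p Y with hj
  set m₁ := pr p (fun ω => (Y ω).1) with hm₁
  have hjnn : ∀ st, 0 ≤ j st := pr_nonneg p Y hp
  have hle1 : ∀ s t, j (s, t) ≤ m₁ s := by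
    intro s t
    rw [hm₁, pr_fst]
    exact Finset.single_le_sum (fun t' _ => hjnn (s, t')) (Finset.mem_univ t)
  have e1 : ent p (fun ω => (Y ω).1) = - ∑ st : S₁ × S₂, j st * Real.logb 2 (m₁ st.1) := by
    rw [ent_eq_sum_univ]
    congr 1
    rw [Fintype.sum_prod_type]
    refine Finset.sum_congr rfl fun s _ => ?_
    rw [← hm₁]
    have : m₁ s * Real.logb 2 (m₁ s) = (∑ t, j (s, t)) * Real.logb 2 (m₁ s) := by
      rw [← pr_fst p Y s]
    rw [this, Finset.sum_mul]
  have e0 : ent p Y = - ∑ st : S₁ × S₂, j st * Real.logb 2 (j st) := by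
    rw [ent_eq_sum_univ]
  have hsum : ∑ st : S₁ × S₂, j st * Real.logb 2 (j st)
      = ∑ st : S₁ × S₂, j st * Real.logb 2 (m₁ st.1) := by
    have := hent; rw [e0, e1] at this; linarith
  have hptle : ∀ st : S₁ × S₂, j st * Real.logb 2 (j st) ≤ j st * Real.logb 2 (m₁ st.1) := by
    intro st
    rcases eq_or_lt_of_le (hjnn st) with h0 | h0
    · rw [← h0]; simp
    · exact mul_le_mul_of_nonneg_left
        (Real.logb_le_logb_of_le one_lt_two h0 (hle1 st.1 st.2)) (le_of_lt h0)
  have heach := (Finset.sum_eq_sum_iff_of_le (fun st _ => hptle st)).1 hsum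
  have hjm : ∀ st : S₁ × S₂, j st ≠ 0 → j st = m₁ st.1 := by
    intro st h0
    have hpos : 0 < j st := lt_of_le_of_ne (hjnn st) (Ne.symm h0)
    have := heach st (Finset.mem_univ st)
    have hlog : Real.logb 2 (j st) = Real.logb 2 (m₁ st.1) := by
      exact mul_left_cancel₀ h0 this
    by_contra hne
    have hlt : j st < m₁ st.1 := lt_of_le_of_ne (hle1 st.1 st.2) hne
    have := Real.logb_lt_logb one_lt_two hpos hlt
    rw [hlog] at this
    exact lt_irrefl _ this
  intro s t t' h1 h2
  by_contra hne
  have hm : m₁ s = ∑ t'', j (s, t'') := pr_fst p Y s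
  have hsum2 : j (s, t) + j (s, t') ≤ ∑ t'', j (s, t'') := by
    have : ({t, t'} : Finset S₂) ⊆ Finset.univ := Finset.subset_univ _
    calc j (s, t) + j (s, t') = ∑ t'' ∈ ({t, t'} : Finset S₂), j (s, t'') := by
          rw [Finset.sum_pair hne]
      _ ≤ ∑ t'', j (s, t'') := Finset.sum_le_sum_of_subset_of_nonneg this
          (fun x _ _ => hjnn (s, x))
  rw [← hm, ← hjm (s, t) h1] at hsum2
  have h2' : 0 < j (s, t') := lt_of_le_of_ne (hjnn (s, t')) (Ne.symm h2)
  have h1' : 0 < j (s, t) := lt_of_le_of_ne (hjnn (s, t)) (Ne.symm h1)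
  have : j (s, t') ≤ 0 := by linarith
  linarith

end Info
section Glue
variable {n : ℕ} (m : Fin n → ℕ)

def glueF (A B : Finset (Fin n))
    (st : ((i : {x // x ∈ A}) → Fin (m i.1)) × ((i : {x // x ∈ B}) → Fin (m i.1)))
    (i : {x // x ∈ A ∪ B}) : Fin (m i.1) :=
  if h : i.1 ∈ A then st.1 ⟨i.1, h⟩ else st.2 ⟨i.1, (Finset.mem_union.1 i.2).resolve_left h⟩

def splitF (A B : Finset (Fin n)) (y : (i : {x // x ∈ (A ∪ B : Finset (Fin n))}) → Fin (m i.1)) :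
    ((i : {x // x ∈ A}) → Fin (m i.1)) × ((i : {x // x ∈ B}) → Fin (m i.1)) :=
  (fun i => y ⟨i.1, Finset.mem_union_left _ i.2⟩, fun i => y ⟨i.1, Finset.mem_union_right _ i.2⟩)

lemma ent_union (p : (∀ i, Fin (m i)) → ℝ) (A B : Finset (Fin n)) :
    ent p (fun x => ((fun i : {y // y ∈ A} => x i.1), (fun i : {y // y ∈ B} => x i.1)))
      = ent p (fun x (i : {y // y ∈ (A ∪ B : Finset (Fin n))}) => x i.1) := by
  refine ent_congr p _ _ (glueF m A B) (splitF m A B) (fun x => ?_) (fun x => rfl)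
  funext i
  unfold glueF
  by_cases h : i.1 ∈ A <;> simp [h]

lemma ent_congr_fst {Ω : Type} [Fintype Ω] {S₁ S₂ T₁ : Type}
    [DecidableEq S₁] [DecidableEq S₂] [DecidableEq T₁]
    (p : Ω → ℝ) (F : Ω → S₁) (F' : Ω → T₁) (G : Ω → S₂)
    (f₁ : S₁ → T₁) (g₁ : T₁ → S₁) (hf : ∀ ω, f₁ (F ω) = F' ω) (hg : ∀ ω, g₁ (F' ω) = F ω) :
    ent p (fun ω => (F ω, G ω)) = ent p (fun ω => (F' ω, G ω)) := by
  refine ent_congr p _ _ (Prod.map f₁ id) (Prod.map g₁ id) (fun ω => ?_) (fun ω => ?_) <;>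
    simp [Prod.map, hf ω, hg ω]

end Glue
section Forward

def restr (m : Fin 4 → ℕ) (A : Finset (Fin 4)) (x : ∀ i, Fin (m i)) (i : {y // y ∈ A}) :
    Fin (m i.1) := x i.1

def rpair (m : Fin 4 → ℕ) (A B : Finset (Fin 4)) (x : ∀ i, Fin (m i)) :
    ((i : {y // y ∈ A}) → Fin (m i.1)) × ((i : {y // y ∈ B}) → Fin (m i.1)) :=
  (restr m A x, restr m B x)

def rtrip (m : Fin 4 → ℕ) (A B C : Finset (Fin 4)) (x : ∀ i, Fin (m i)) :
    (((i : {y // y ∈ A}) → Fin (m i.1)) × ((i : {y // y ∈ B}) → Fin (m i.1)))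
      × ((i : {y // y ∈ C}) → Fin (m i.1)) :=
  (rpair m A B x, restr m C x)

def rtripR (m : Fin 4 → ℕ) (A B C : Finset (Fin 4)) (x : ∀ i, Fin (m i)) :
    ((i : {y // y ∈ A}) → Fin (m i.1)) × (((i : {y // y ∈ B}) → Fin (m i.1))
      × ((i : {y // y ∈ C}) → Fin (m i.1))) :=
  (restr m A x, restr m B x, restr m C x)

variable {m : Fin 4 → ℕ} (p : (∀ i, Fin (m i)) → ℝ)

lemma ent_rpair (A B : Finset (Fin 4)) :
    ent p (rpair m A B) = ent p (restr m (A ∪ B)) :=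
  ent_union m p A B

lemma ent_rtrip (A B C : Finset (Fin 4)) :
    ent p (rtrip m A B C) = ent p (restr m (A ∪ B ∪ C)) := by
  have step1 : ent p (rtrip m A B C)
      = ent p (fun x => (restr m (A ∪ B) x, restr m C x)) := by
    refine ent_congr_fst p (rpair m A B) (restr m (A ∪ B)) (restr m C)
      (glueF m A B) (splitF m A B) (fun x => ?_) (fun x => rfl)
    funext i
    unfold glueF rpair restr
    by_cases h : i.1 ∈ A <;> simp [h]
  rw [step1]
  exact ent_union m p (A ∪ B) C

set_option maxHeartbeats 2000000 in
lemma forward_b0 {a : ℝ}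
    (hp : ∀ x, 0 ≤ p x) (hp1 : ∑ x, p x = 1)
    (hent : ∀ A : Finset (Fin 4),
      ent p (fun x (i : A) => x i.1) = a * rkU 2 ({0,1,2} : Finset (Fin 4)) A) :
    ∃ k : ℕ, 0 < k ∧ a = Real.logb 2 k := by
  classical
  have hrk : ∀ (A : Finset (Fin 4)) (c : ℕ), (A ∩ {0,1,2}).card = c →
      rkU 2 ({0,1,2} : Finset (Fin 4)) A = min 2 (c : ℝ) := by
    intro A c h; unfold rkU; rw [h]; norm_num
  -- entropy values
  have eS0 : ent p (restr m {0}) = a := by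
    have h := hent {0}
    rw [hrk {0} 1 (by decide)] at h
    have hmin : min (2:ℝ) ((1:ℕ):ℝ) = 1 := by norm_num
    rw [hmin, mul_one] at h
    exact h
  have eS1 : ent p (restr m {1}) = a := by
    have h := hent {1}
    rw [hrk {1} 1 (by decide)] at h
    have hmin : min (2:ℝ) ((1:ℕ):ℝ) = 1 := by norm_num
    rw [hmin, mul_one] at h
    exact h
  have eS2 : ent p (restr m {2}) = a := by
    have h := hent {2}
    rw [hrk {2} 1 (by decide)] at h
    have hmin : min (2:ℝ) ((1:ℕ):ℝ) = 1 := by norm_num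
    rw [hmin, mul_one] at h
    exact h
  have eP01 : ent p (restr m ({0} ∪ {1})) = 2 * a := by
    have h := hent ({0} ∪ {1})
    rw [hrk _ 2 (by decide)] at h
    have hmin : min (2:ℝ) ((2:ℕ):ℝ) = 2 := by norm_num
    rw [hmin] at h
    have h' : ent p (restr m ({0} ∪ {1})) = a * 2 := h
    linarith
  have eP02 : ent p (restr m ({0} ∪ {2})) = 2 * a := by
    have h := hent ({0} ∪ {2})
    rw [hrk _ 2 (by decide)] at h
    have hmin : min (2:ℝ) ((2:ℕ):ℝ) = 2 := by norm_num
    rw [hmin] at h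
    have h' : ent p (restr m ({0} ∪ {2})) = a * 2 := h
    linarith
  have eP12 : ent p (restr m ({1} ∪ {2})) = 2 * a := by
    have h := hent ({1} ∪ {2})
    rw [hrk _ 2 (by decide)] at h
    have hmin : min (2:ℝ) ((2:ℕ):ℝ) = 2 := by norm_num
    rw [hmin] at h
    have h' : ent p (restr m ({1} ∪ {2})) = a * 2 := h
    linarith
  have eT012 : ent p (restr m ({0} ∪ {1} ∪ {2})) = 2 * a := by
    have h := hent ({0} ∪ {1} ∪ {2})
    rw [hrk _ 3 (by decide)] at h
    have hmin : min (2:ℝ) ((3:ℕ):ℝ) = 2 := by norm_num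
    rw [hmin] at h
    have h' : ent p (restr m ({0} ∪ {1} ∪ {2})) = a * 2 := h
    linarith
  have eT120 : ent p (restr m ({1} ∪ {2} ∪ {0})) = 2 * a := by
    have h := hent ({1} ∪ {2} ∪ {0})
    rw [hrk _ 3 (by decide)] at h
    have hmin : min (2:ℝ) ((3:ℕ):ℝ) = 2 := by norm_num
    rw [hmin] at h
    have h' : ent p (restr m ({1} ∪ {2} ∪ {0})) = a * 2 := h
    linarith
  have h01 : ent p (rpair m {0} {1}) = 2 * a := (ent_rpair p {0} {1}).trans eP01
  have h02 : ent p (rpair m {0} {2}) = 2 * a := (ent_rpair p {0} {2}).trans eP02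
  have h12 : ent p (rpair m {1} {2}) = 2 * a := (ent_rpair p {1} {2}).trans eP12
  have hV012 : ent p (rtrip m {0} {1} {2}) = 2 * a := (ent_rtrip p {0} {1} {2}).trans eT012
  have hV120 : ent p (rtrip m {1} {2} {0}) = 2 * a := (ent_rtrip p {1} {2} {0}).trans eT120
  -- independences
  have f01 : ∀ st, pr p (rpair m {0} {1}) st
      = pr p (restr m {0}) st.1 * pr p (restr m {1}) st.2 := by
    have ha : ent p (fun ω => (rpair m {0} {1} ω).1) = a := eS0
    have hb : ent p (fun ω => (rpair m {0} {1} ω).2) = a := eS1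
    exact indep_of_ent_eq p hp hp1 (rpair m {0} {1}) (by rw [h01, ha, hb]; ring)
  have f02 : ∀ st, pr p (rpair m {0} {2}) st
      = pr p (restr m {0}) st.1 * pr p (restr m {2}) st.2 := by
    have ha : ent p (fun ω => (rpair m {0} {2} ω).1) = a := eS0
    have hb : ent p (fun ω => (rpair m {0} {2} ω).2) = a := eS2
    exact indep_of_ent_eq p hp hp1 (rpair m {0} {2}) (by rw [h02, ha, hb]; ring)
  have f12 : ∀ st, pr p (rpair m {1} {2}) st
      = pr p (restr m {1}) st.1 * pr p (restr m {2}) st.2 := by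
    have ha : ent p (fun ω => (rpair m {1} {2} ω).1) = a := eS1
    have hb : ent p (fun ω => (rpair m {1} {2} ω).2) = a := eS2
    exact indep_of_ent_eq p hp hp1 (rpair m {1} {2}) (by rw [h12, ha, hb]; ring)
  -- determinations
  have d3 : ∀ s t t', pr p (rtrip m {0} {1} {2}) (s, t) ≠ 0 →
      pr p (rtrip m {0} {1} {2}) (s, t') ≠ 0 → t = t' := by
    have ha : ent p (fun ω => (rtrip m {0} {1} {2} ω).1) = 2 * a := h01
    exact det_of_ent_eq p hp (rtrip m {0} {1} {2}) (by rw [hV012, ha])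
  have d1 : ∀ s t t', pr p (rtrip m {1} {2} {0}) (s, t) ≠ 0 →
      pr p (rtrip m {1} {2} {0}) (s, t') ≠ 0 → t = t' := by
    have ha : ent p (fun ω => (rtrip m {1} {2} {0} ω).1) = 2 * a := h12
    exact det_of_ent_eq p hp (rtrip m {1} {2} {0}) (by rw [hV120, ha])
  -- notation for the joint distribution
  set ρ := fun st => pr p (rtripR m {0} {1} {2}) st with hρ
  have ρnn : ∀ st, 0 ≤ ρ st := fun st => pr_nonneg p _ hp st
  -- pr links
  have l012 : ∀ x y z, pr p (rtrip m {0} {1} {2}) ((x, y), z) = ρ (x, y, z) := by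
    intro x y z
    refine pr_congr p _ _ fun ω => ?_
    unfold rtrip rtripR rpair
    simp only [Prod.ext_iff]
    tauto
  have l120 : ∀ x y z, pr p (rtrip m {1} {2} {0}) ((y, z), x) = ρ (x, y, z) := by
    intro x y z
    refine pr_congr p _ _ fun ω => ?_
    unfold rtrip rtripR rpair
    simp only [Prod.ext_iff]
    tauto
  have l021 : ∀ x y z, pr p (rtrip m {0} {2} {1}) ((x, z), y) = ρ (x, y, z) := by
    intro x y z
    refine pr_congr p _ _ fun ω => ?_
    unfold rtrip rtripR rpair
    simp only [Prod.ext_iff]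
    tauto
  -- marginals
  have mg01 : ∀ x y, pr p (rpair m {0} {1}) (x, y) = ∑ z, ρ (x, y, z) := by
    intro x y
    have h : pr p (rpair m {0} {1}) (x, y)
        = ∑ z, pr p (rtrip m {0} {1} {2}) ((x, y), z) := pr_fst p (rtrip m {0} {1} {2}) (x, y)
    rw [h]
    exact Finset.sum_congr rfl fun z _ => l012 x y z
  have mg12 : ∀ y z, pr p (rpair m {1} {2}) (y, z) = ∑ x, ρ (x, y, z) := by
    intro y z
    have h : pr p (rpair m {1} {2}) (y, z)
        = ∑ x, pr p (rtrip m {1} {2} {0}) ((y, z), x) := pr_fst p (rtrip m {1} {2} {0}) (y, z)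
    rw [h]
    exact Finset.sum_congr rfl fun x _ => l120 x y z
  have mg02 : ∀ x z, pr p (rpair m {0} {2}) (x, z) = ∑ y, ρ (x, y, z) := by
    intro x z
    have h : pr p (rpair m {0} {2}) (x, z)
        = ∑ y, pr p (rtrip m {0} {2} {1}) ((x, z), y) := pr_fst p (rtrip m {0} {2} {1}) (x, z)
    rw [h]
    exact Finset.sum_congr rfl fun y _ => l021 x y z
  have sg0 : ∀ x, pr p (restr m {0}) x = ∑ y, pr p (rpair m {0} {1}) (x, y) :=
    fun x => pr_fst p (rpair m {0} {1}) x
  have sg1 : ∀ y, pr p (restr m {1}) y = ∑ x, pr p (rpair m {0} {1}) (x, y) :=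
    fun y => pr_snd p (rpair m {0} {1}) y
  have sg2 : ∀ z, pr p (restr m {2}) z = ∑ y, pr p (rpair m {1} {2}) (y, z) :=
    fun z => pr_snd p (rpair m {1} {2}) z
  set q0 := pr p (restr m {0}) with hq0
  set q1 := pr p (restr m {1}) with hq1
  set q2 := pr p (restr m {2}) with hq2
  have q0nn : ∀ x, 0 ≤ q0 x := fun x => pr_nonneg p _ hp x
  have q1nn : ∀ x, 0 ≤ q1 x := fun x => pr_nonneg p _ hp x
  have q2nn : ∀ x, 0 ≤ q2 x := fun x => pr_nonneg p _ hp x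
  have prnn01 : ∀ st, 0 ≤ pr p (rpair m {0} {1}) st := fun st => pr_nonneg p _ hp st
  -- the key local identities
  have E13 : ∀ x y z, ρ (x, y, z) ≠ 0 → q0 x = q2 z := by
    intro x y z hne
    have hρpos : 0 < ρ (x, y, z) := lt_of_le_of_ne (ρnn _) (Ne.symm hne)
    -- pr (rpair01) (x,y) = ρ (x,y,z) using d3
    have hA : pr p (rpair m {0} {1}) (x, y) = ρ (x, y, z) := by
      rw [mg01]
      rw [Finset.sum_eq_single_of_mem z (Finset.mem_univ z)]
      intro z' _ hz'
      by_contra hne'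
      have := d3 (x, y) z' z (by rw [l012]; exact hne') (by rw [l012]; exact hne)
      exact hz' this
    -- pr (rpair12) (y,z) = ρ (x,y,z) using d1
    have hB : pr p (rpair m {1} {2}) (y, z) = ρ (x, y, z) := by
      rw [mg12]
      rw [Finset.sum_eq_single_of_mem x (Finset.mem_univ x)]
      intro x' _ hx'
      by_contra hne'
      have := d1 (y, z) x' x (by rw [l120]; exact hne') (by rw [l120]; exact hne)
      exact hx' this
    have hq1pos : 0 < q1 y := by
      have : ρ (x, y, z) ≤ q1 y := by
        rw [sg1]
        calc ρ (x, y, z) = pr p (rpair m {0} {1}) (x, y) := hA.symm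
          _ ≤ ∑ x', pr p (rpair m {0} {1}) (x', y) :=
              Finset.single_le_sum (fun x' _ => prnn01 (x', y)) (Finset.mem_univ x)
      linarith
    have e1 : q0 x * q1 y = ρ (x, y, z) := by rw [← hA, f01 (x, y)]
    have e2 : q1 y * q2 z = ρ (x, y, z) := by rw [← hB, f12 (y, z)]
    have : q0 x * q1 y = q1 y * q2 z := by rw [e1, e2]
    have := mul_right_cancel₀ (ne_of_gt hq1pos) (by linarith [this] : q0 x * q1 y = q2 z * q1 y)
    linarith [this]
  have uniform : ∀ x x', q0 x ≠ 0 → q0 x' ≠ 0 → q0 x = q0 x' := by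
    intro x x' hx hx'
    -- find (y,z) in the support above x
    have : ∃ y, pr p (rpair m {0} {1}) (x, y) ≠ 0 := by
      by_contra hno
      push_neg at hno
      have : q0 x = 0 := by rw [sg0]; exact Finset.sum_eq_zero fun y _ => hno y
      exact hx this
    obtain ⟨y, hy⟩ := this
    have : ∃ z, ρ (x, y, z) ≠ 0 := by
      by_contra hno
      push_neg at hno
      have : pr p (rpair m {0} {1}) (x, y) = 0 := by
        rw [mg01]; exact Finset.sum_eq_zero fun z _ => hno z
      exact hy this
    obtain ⟨z, hz⟩ := this
    have hxz := E13 x y z hz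
    have hq2pos : q2 z ≠ 0 := by rw [← hxz]; exact hx
    -- find y'' with ρ (x', y'', z) ≠ 0
    have hp02 : pr p (rpair m {0} {2}) (x', z) ≠ 0 := by
      rw [f02 (x', z)]
      exact mul_ne_zero hx' hq2pos
    have : ∃ y'', ρ (x', y'', z) ≠ 0 := by
      by_contra hno
      push_neg at hno
      have : pr p (rpair m {0} {2}) (x', z) = 0 := by
        rw [mg02]; exact Finset.sum_eq_zero fun y'' _ => hno y''
      exact hp02 this
    obtain ⟨y'', hy''⟩ := this
    have := E13 x' y'' z hy''
    rw [hxz, this]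
  -- conclude: q0 is uniform on its support
  set T := Finset.univ.filter (fun x => q0 x ≠ 0) with hT
  have hmemT : ∀ x, x ∈ T ↔ q0 x ≠ 0 := by
    intro x
    rw [hT, Finset.mem_filter]
    exact ⟨fun h => h.2, fun h => ⟨Finset.mem_univ x, h⟩⟩
  have hsumq : ∑ x, q0 x = 1 := by rw [hq0, sum_pr, hp1]
  have hTne : ∃ x, q0 x ≠ 0 := by
    by_contra hno
    push_neg at hno
    have : (1:ℝ) = 0 := by
      rw [← hsumq]
      exact Finset.sum_eq_zero fun x _ => hno x
    norm_num at this
  obtain ⟨x₀, hx₀ne⟩ := hTne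
  have hx₀ : x₀ ∈ T := (hmemT x₀).2 hx₀ne
  set c := q0 x₀ with hc
  have hcpos : 0 < c := lt_of_le_of_ne (q0nn x₀) (Ne.symm hx₀ne)
  have hallc : ∀ x ∈ T, q0 x = c := by
    intro x hx
    exact uniform x x₀ ((hmemT x).1 hx) hx₀ne
  have hsumT : ∑ x ∈ T, q0 x = 1 := by
    rw [← hsumq]
    refine Finset.sum_subset (Finset.subset_univ T) fun x _ hx => ?_
    by_contra hxx
    exact hx ((hmemT x).2 hxx)
  have hcard : (T.card : ℝ) * c = 1 := by
    rw [← hsumT]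
    rw [Finset.sum_congr rfl hallc, Finset.sum_const, nsmul_eq_mul]
  have hTcard : (0:ℝ) < T.card := by
    by_contra hno
    push_neg at hno
    have : (T.card : ℝ) = 0 := le_antisymm hno (Nat.cast_nonneg _)
    rw [this, zero_mul] at hcard
    norm_num at hcard
  have hcval : c = ((T.card : ℝ))⁻¹ := (inv_eq_of_mul_eq_one_right hcard).symm
  -- compute the entropy
  have hfin : a = Real.logb 2 T.card := by
    rw [← eS0, ent_eq_sum_univ, ← hq0]
    have hterm : ∀ x, q0 x * Real.logb 2 (q0 x)
        = if x ∈ T then c * Real.logb 2 c else 0 := by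
      intro x
      by_cases hx : x ∈ T
      · rw [hallc x hx, if_pos hx]
      · have hz : q0 x = 0 := by
          by_contra hxx
          exact hx ((hmemT x).2 hxx)
        rw [if_neg hx, hz, zero_mul]
    rw [Finset.sum_congr rfl (fun x _ => hterm x), Finset.sum_ite_mem,
      Finset.univ_inter, Finset.sum_const, nsmul_eq_mul]
    rw [hcval, Real.logb_inv]
    have hTne0 : (T.card : ℝ) ≠ 0 := ne_of_gt hTcard
    field_simp
  exact ⟨T.card, by exact_mod_cast hTcard, hfin⟩

end Forward
section ProdLemmas
variable {Ω : Type} [Fintype Ω] {S T : Type} [DecidableEq S] [DecidableEq T]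

lemma pr_id (q : Ω → ℝ) [DecidableEq Ω] (v : Ω) : pr q id v = q v := by
  unfold pr; simp

lemma ent_of_subsingleton [Subsingleton S] [Nonempty Ω] (p : Ω → ℝ) (Y : Ω → S)
    (hp1 : ∑ ω, p ω = 1) : ent p Y = 0 := by
  have hω₀ : ∃ ω₀ : Ω, True := ⟨Classical.arbitrary Ω, trivial⟩
  obtain ⟨ω₀, -⟩ := hω₀
  have himg : Finset.univ.image Y = {Y ω₀} := by
    ext s
    simp only [Finset.mem_image, Finset.mem_univ, true_and, Finset.mem_singleton]
    exact ⟨fun ⟨ω, h⟩ => h ▸ Subsingleton.elim _ _, fun h => ⟨ω₀, h.symm⟩⟩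
  have hpr : pr p Y (Y ω₀) = 1 := by
    unfold pr
    rw [← hp1]
    exact Finset.sum_congr rfl fun ω _ => by rw [if_pos (Subsingleton.elim _ _)]
  unfold ent
  rw [himg, Finset.sum_singleton, hpr]
  simp

lemma ent_reindex {Ω' : Type} [Fintype Ω'] (σ : Ω' ≃ Ω) (p : Ω → ℝ) (Y : Ω → S) :
    ent (fun ω' => p (σ ω')) (fun ω' => Y (σ ω')) = ent p Y := by
  have hpr : ∀ s, pr (fun ω' => p (σ ω')) (fun ω' => Y (σ ω')) s = pr p Y s := by
    intro s
    unfold pr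
    exact Fintype.sum_equiv σ _ _ fun ω' => rfl
  have himg : Finset.univ.image (fun ω' => Y (σ ω')) = Finset.univ.image Y := by
    ext s
    simp only [Finset.mem_image, Finset.mem_univ, true_and]
    exact ⟨fun ⟨ω', h⟩ => ⟨σ ω', h⟩, fun ⟨ω, h⟩ => ⟨σ.symm ω, by simpa using h⟩⟩
  unfold ent
  rw [himg]
  congr 1
  exact Finset.sum_congr rfl fun s _ => by rw [hpr s]

lemma mul_logb_mul (x y : ℝ) :
    x * y * Real.logb 2 (x * y) = y * (x * Real.logb 2 x) + x * (y * Real.logb 2 y) := by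
  rcases eq_or_ne x 0 with hx | hx
  · simp [hx]
  rcases eq_or_ne y 0 with hy | hy
  · simp [hy]
  rw [Real.logb_mul hx hy]
  ring

lemma pr_prod {Ω₁ Ω₂ : Type} [Fintype Ω₁] [Fintype Ω₂]
    (p₁ : Ω₁ → ℝ) (p₂ : Ω₂ → ℝ) (Y₁ : Ω₁ → S) (Y₂ : Ω₂ → T) (s : S) (t : T) :
    pr (fun ω : Ω₁ × Ω₂ => p₁ ω.1 * p₂ ω.2) (fun ω => (Y₁ ω.1, Y₂ ω.2)) (s, t)
      = pr p₁ Y₁ s * pr p₂ Y₂ t := by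
  unfold pr
  rw [Fintype.sum_prod_type, Finset.sum_mul_sum]
  refine Finset.sum_congr rfl fun ω₁ _ => Finset.sum_congr rfl fun ω₂ _ => ?_
  by_cases h1 : Y₁ ω₁ = s <;> by_cases h2 : Y₂ ω₂ = t <;>
    simp [h1, h2, Prod.ext_iff]

lemma ent_prod {Ω₁ Ω₂ : Type} [Fintype Ω₁] [Fintype Ω₂] [Fintype S] [Fintype T]
    (p₁ : Ω₁ → ℝ) (p₂ : Ω₂ → ℝ) (hp₁1 : ∑ ω, p₁ ω = 1) (hp₂1 : ∑ ω, p₂ ω = 1)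
    (Y₁ : Ω₁ → S) (Y₂ : Ω₂ → T) :
    ent (fun ω : Ω₁ × Ω₂ => p₁ ω.1 * p₂ ω.2) (fun ω => (Y₁ ω.1, Y₂ ω.2))
      = ent p₁ Y₁ + ent p₂ Y₂ := by
  have e1 : ∀ s : S, (∑ t : T,
      pr (fun ω : Ω₁ × Ω₂ => p₁ ω.1 * p₂ ω.2) (fun ω => (Y₁ ω.1, Y₂ ω.2)) (s, t)
        * Real.logb 2 (pr (fun ω : Ω₁ × Ω₂ => p₁ ω.1 * p₂ ω.2) (fun ω => (Y₁ ω.1, Y₂ ω.2)) (s, t)))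
      = pr p₁ Y₁ s * Real.logb 2 (pr p₁ Y₁ s)
        + pr p₁ Y₁ s * (∑ t : T, pr p₂ Y₂ t * Real.logb 2 (pr p₂ Y₂ t)) := by
    intro s
    have hterm : ∀ t : T,
        pr (fun ω : Ω₁ × Ω₂ => p₁ ω.1 * p₂ ω.2) (fun ω => (Y₁ ω.1, Y₂ ω.2)) (s, t)
          * Real.logb 2 (pr (fun ω : Ω₁ × Ω₂ => p₁ ω.1 * p₂ ω.2) (fun ω => (Y₁ ω.1, Y₂ ω.2)) (s, t))
        = pr p₂ Y₂ t * (pr p₁ Y₁ s * Real.logb 2 (pr p₁ Y₁ s))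
          + pr p₁ Y₁ s * (pr p₂ Y₂ t * Real.logb 2 (pr p₂ Y₂ t)) := by
      intro t
      rw [pr_prod p₁ p₂ Y₁ Y₂ s t, mul_logb_mul]
    rw [Finset.sum_congr rfl (fun t _ => hterm t), Finset.sum_add_distrib,
      ← Finset.sum_mul, sum_pr, hp₂1, one_mul, ← Finset.mul_sum]
  rw [ent_eq_sum_univ, ent_eq_sum_univ, ent_eq_sum_univ, Fintype.sum_prod_type,
    Finset.sum_congr rfl (fun s _ => e1 s), Finset.sum_add_distrib,
    ← Finset.sum_mul, sum_pr, hp₁1, one_mul]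
  ring

/-- push forward a model to the canonical alphabet distribution -/
lemma ent_push [Fintype S] [Fintype T] (w : Ω → ℝ) (X : Ω → S) (f : S → T) :
    ent (pr w X) (f) = ent w (fun ω => f (X ω)) := by
  have hpr : ∀ t, pr (pr w X) f t = pr w (fun ω => f (X ω)) t := by
    intro t
    rw [pr_comp w X f t]
    rfl
  rw [ent_eq_sum_univ, ent_eq_sum_univ]
  congr 1
  exact Finset.sum_congr rfl fun t _ => by rw [hpr t]

lemma isEntropic_of_model (n : ℕ) (h : Finset (Fin n) → ℝ) (Ω : Type) [Fintype Ω]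
    (w : Ω → ℝ) (hw : ∀ ω, 0 ≤ w ω) (hw1 : ∑ ω, w ω = 1)
    (m : Fin n → ℕ) (X : Ω → (∀ i, Fin (m i)))
    (hA : ∀ A : Finset (Fin n), h A = ent w (fun ω (i : A) => X ω i.1)) :
    IsEntropic n h := by
  classical
  refine ⟨m, pr w X, fun x => pr_nonneg w X hw x, by rw [sum_pr, hw1], fun A => ?_⟩
  rw [hA A]
  exact (ent_push w X (fun x (i : A) => x i.1)).symm

end ProdLemmas
section AddLemma

def pairPiEquiv (n : ℕ) (m₁ m₂ : Fin n → ℕ) :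
    ((∀ i, Fin (m₁ i)) × (∀ i, Fin (m₂ i))) ≃ (∀ i, Fin (m₁ i * m₂ i)) where
  toFun q i := finProdFinEquiv (q.1 i, q.2 i)
  invFun x := (fun i => (finProdFinEquiv.symm (x i)).1, fun i => (finProdFinEquiv.symm (x i)).2)
  left_inv q := by
    have h : ∀ i, finProdFinEquiv.symm (finProdFinEquiv (q.1 i, q.2 i)) = (q.1 i, q.2 i) :=
      fun i => Equiv.symm_apply_apply _ _
    exact Prod.ext (funext fun i => congrArg Prod.fst (h i))
      (funext fun i => congrArg Prod.snd (h i))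
  right_inv x := by
    funext i
    exact Equiv.apply_symm_apply _ _

lemma IsEntropic.add {n : ℕ} {h₁ h₂ : Finset (Fin n) → ℝ}
    (H₁ : IsEntropic n h₁) (H₂ : IsEntropic n h₂) :
    IsEntropic n (fun A => h₁ A + h₂ A) := by
  classical
  obtain ⟨m₁, p₁, hp₁, hp₁1, he₁⟩ := H₁
  obtain ⟨m₂, p₂, hp₂, hp₂1, he₂⟩ := H₂
  set σ := pairPiEquiv n m₁ m₂ with hσ
  refine ⟨fun i => m₁ i * m₂ i, fun x => p₁ (σ.symm x).1 * p₂ (σ.symm x).2,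
    fun x => mul_nonneg (hp₁ _) (hp₂ _), ?_, fun A => ?_⟩
  · rw [← Equiv.sum_comp σ (fun x => p₁ (σ.symm x).1 * p₂ (σ.symm x).2)]
    simp only [Equiv.symm_apply_apply]
    rw [Fintype.sum_prod_type]
    rw [← hp₁1]
    refine Finset.sum_congr rfl fun u _ => ?_
    show (∑ v, p₁ u * p₂ v) = p₁ u
    rw [← Finset.mul_sum, hp₂1, mul_one]
  · -- step 1: recode the restricted variable through finProdFinEquiv coordinates
    have step1 : ent (fun x => p₁ (σ.symm x).1 * p₂ (σ.symm x).2)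
          (fun x (i : A) => x i.1)
        = ent (fun x => p₁ (σ.symm x).1 * p₂ (σ.symm x).2)
          (fun x => ((fun i : A => (finProdFinEquiv.symm (x i.1)).1),
                     (fun i : A => (finProdFinEquiv.symm (x i.1)).2))) := by
      refine ent_congr _ _ _
        (fun y => ((fun i : A => (finProdFinEquiv.symm (y i)).1),
                   (fun i : A => (finProdFinEquiv.symm (y i)).2)))
        (fun st (i : A) => finProdFinEquiv (st.1 i, st.2 i))
        (fun x => rfl) (fun x => ?_)
      funext i
      exact Equiv.apply_symm_apply _ _
    rw [step1]
    -- step 2: reindex by σ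
    have step2 : ent (fun x => p₁ (σ.symm x).1 * p₂ (σ.symm x).2)
          (fun x => ((fun i : A => (finProdFinEquiv.symm (x i.1)).1),
                     (fun i : A => (finProdFinEquiv.symm (x i.1)).2)))
        = ent (fun q : (∀ i, Fin (m₁ i)) × (∀ i, Fin (m₂ i)) => p₁ q.1 * p₂ q.2)
          (fun q => ((fun i : A => q.1 i.1), (fun i : A => q.2 i.1))) := by
      have := ent_reindex σ
        (fun x => p₁ (σ.symm x).1 * p₂ (σ.symm x).2)
        (fun x => ((fun i : A => (finProdFinEquiv.symm (x i.1)).1),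
                   (fun i : A => (finProdFinEquiv.symm (x i.1)).2)))
      rw [← this]
      have hp : (fun q => (fun x => p₁ (σ.symm x).1 * p₂ (σ.symm x).2) (σ q))
          = fun q : (∀ i, Fin (m₁ i)) × (∀ i, Fin (m₂ i)) => p₁ q.1 * p₂ q.2 := by
        funext q
        simp
      have hY : (fun q => (fun x => ((fun i : A => (finProdFinEquiv.symm (x i.1)).1),
                   (fun i : A => (finProdFinEquiv.symm (x i.1)).2))) (σ q))
          = fun q : (∀ i, Fin (m₁ i)) × (∀ i, Fin (m₂ i)) =>
              ((fun i : A => q.1 i.1), (fun i : A => q.2 i.1)) := by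
        funext q
        have h1 : ∀ i : Fin n, finProdFinEquiv.symm (σ q i) = (q.1 i, q.2 i) := by
          intro i
          rw [hσ]
          simp [pairPiEquiv]
        simp only [h1]
      rw [hp, hY]
    rw [step2]
    -- step 3: product entropy
    have step3 := ent_prod p₁ p₂ hp₁1 hp₂1
      (fun u (i : A) => u i.1) (fun v (i : A) => v i.1)
    rw [step3]
    rw [← he₁ A, ← he₂ A]

end AddLemma
section Shared

lemma log2_ne : Real.log 2 ≠ 0 := by
  have : (1:ℝ) < 2 := one_lt_two
  positivity

/-- there is a distribution on some finite alphabet of any prescribed entropy -/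
lemma exists_dist_of_ent (b' : ℝ) (hb' : 0 ≤ b') :
    ∃ (N : ℕ) (q : Fin (N+1) → ℝ), (∀ v, 0 ≤ q v) ∧ (∑ v, q v = 1) ∧
      -∑ v, q v * Real.logb 2 (q v) = b' := by
  classical
  set N := ⌈(2:ℝ)^(b' : ℝ)⌉₊ with hN
  have hNge : (2:ℝ)^(b':ℝ) ≤ (N:ℝ) + 1 := by
    have := Nat.le_ceil ((2:ℝ)^(b':ℝ))
    rw [← hN] at this
    linarith
  have hpow_pos : (0:ℝ) < (2:ℝ)^(b':ℝ) := Real.rpow_pos_of_pos (by norm_num) _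
  have hN1pos : (0:ℝ) < (N:ℝ) + 1 := by positivity
  have hlogN : b' ≤ Real.logb 2 ((N:ℝ)+1) := by
    have h := Real.logb_le_logb_of_le one_lt_two hpow_pos hNge
    have h2 : Real.logb 2 ((2:ℝ)^(b':ℝ)) = b' := by
      rw [Real.logb_rpow] <;> norm_num
    rw [h2] at h
    exact h
  set qf : ℝ → Fin (N+1) → ℝ :=
    fun s v => if v = 0 then 1 - s + s/((N:ℝ)+1) else s/((N:ℝ)+1) with hqf
  set F : ℝ → ℝ := fun s => -∑ v, qf s v * Real.logb 2 (qf s v) with hF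
  have hterm : ∀ x : ℝ, x * Real.logb 2 x = -(Real.negMulLog x / Real.log 2) := by
    intro x
    unfold Real.negMulLog Real.logb
    field_simp
  have hFalt : ∀ s, F s = (∑ v, Real.negMulLog (qf s v)) / Real.log 2 := by
    intro s
    show -∑ v, qf s v * Real.logb 2 (qf s v) = _
    simp only [hterm]
    rw [Finset.sum_neg_distrib, neg_neg, Finset.sum_div]
  have hFcont : Continuous F := by
    have hcont : Continuous fun s => (∑ v, Real.negMulLog (qf s v)) / Real.log 2 := by
      apply Continuous.div_const
      apply continuous_finset_sum
      intro v _
      apply Real.continuous_negMulLog.comp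
      by_cases hv : v = 0 <;> simp only [hqf, hv, if_true, if_false] <;> fun_prop
    have heq : F = fun s => (∑ v, Real.negMulLog (qf s v)) / Real.log 2 := funext hFalt
    rw [heq]
    exact hcont
  have hF0 : F 0 = 0 := by
    show -∑ v, qf 0 v * Real.logb 2 (qf 0 v) = 0
    have : ∀ v : Fin (N+1), qf 0 v * Real.logb 2 (qf 0 v) = 0 := by
      intro v
      by_cases hv : v = 0 <;> simp [hqf, hv]
    rw [Finset.sum_congr rfl (fun v _ => this v)]
    simp
  have hF1 : F 1 = Real.logb 2 ((N:ℝ)+1) := by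
    show -∑ v, qf 1 v * Real.logb 2 (qf 1 v) = _
    have hq1v : ∀ v : Fin (N+1), qf 1 v = ((N:ℝ)+1)⁻¹ := by
      intro v
      by_cases hv : v = 0 <;> simp [hqf, hv] <;> field_simp
    rw [Finset.sum_congr rfl (fun v _ => by rw [hq1v v])]
    rw [Finset.sum_const, Finset.card_univ, Fintype.card_fin, nsmul_eq_mul]
    rw [Real.logb_inv]
    push_cast
    have hne : ((N:ℝ)+1) ≠ 0 := ne_of_gt hN1pos
    field_simp
  -- intermediate value theorem
  have hmem : b' ∈ Set.Icc (F 0) (F 1) := by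
    rw [hF0, hF1]
    exact ⟨hb', hlogN⟩
  obtain ⟨s, hs, hFs⟩ := intermediate_value_Icc (by norm_num : (0:ℝ) ≤ 1)
    (hFcont.continuousOn) hmem
  refine ⟨N, qf s, ?_, ?_, ?_⟩
  · intro v
    obtain ⟨hs0, hs1⟩ := hs
    by_cases hv : v = 0 <;> simp only [hqf, hv, if_true, if_false]
    · have : 0 ≤ s/((N:ℝ)+1) := by positivity
      linarith
    · positivity
  · rw [Fin.sum_univ_succ]
    have h0 : qf s 0 = 1 - s + s/((N:ℝ)+1) := by simp [hqf]
    have hsucc : ∀ i : Fin N, qf s i.succ = s/((N:ℝ)+1) := by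
      intro i
      simp [hqf, Fin.succ_ne_zero i]
    rw [h0, Finset.sum_congr rfl (fun i _ => hsucc i), Finset.sum_const,
      Finset.card_univ, Fintype.card_fin, nsmul_eq_mul]
    field_simp
    ring
  · exact hFs

lemma rkU_one_empty : rkU 1 (Finset.univ : Finset (Fin 4)) ∅ = 0 := by
  unfold rkU; simp

lemma rkU_one_nonempty {A : Finset (Fin 4)} (hA : A.Nonempty) :
    rkU 1 (Finset.univ : Finset (Fin 4)) A = 1 := by
  unfold rkU
  rw [Finset.inter_univ]
  have : 1 ≤ (A.card : ℝ) := by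
    have := Finset.card_pos.mpr hA
    exact_mod_cast this
  rw [min_eq_left (by exact_mod_cast this)]
  norm_num

lemma shared_entropic (b' : ℝ) (hb' : 0 ≤ b') :
    IsEntropic 4 (fun A => b' * rkU 1 (Finset.univ : Finset (Fin 4)) A) := by
  classical
  obtain ⟨N, q, hq0, hq1, hqe⟩ := exists_dist_of_ent b' hb'
  apply isEntropic_of_model 4 _ (Fin (N+1)) q hq0 hq1 (fun _ => N+1) (fun ω _ => ω)
  intro A
  rcases A.eq_empty_or_nonempty with rfl | hA
  · rw [rkU_one_empty, mul_zero]
    haveI : IsEmpty {x // x ∈ (∅ : Finset (Fin 4))} :=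
      ⟨fun i => (Finset.notMem_empty i.1 i.2)⟩
    exact (ent_of_subsingleton q _ hq1).symm
  · rw [rkU_one_nonempty hA, mul_one]
    obtain ⟨i₀, hi₀⟩ := hA
    have hcongr : ent q (fun (ω : Fin (N+1)) (_i : {x // x ∈ A}) => ω) = ent q id := by
      refine ent_congr q _ _ (fun y => y ⟨i₀, hi₀⟩) (fun v _ => v) (fun ω => rfl) (fun ω => rfl)
    have : ent q id = -∑ v, q v * Real.logb 2 (q v) := by
      rw [ent_eq_sum_univ]
      congr 1
      exact Finset.sum_congr rfl fun v _ => by rw [pr_id]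
    rw [← hqe]
    exact (hcongr.trans this).symm

end Shared
section Mix

noncomputable def Hb2 (t : ℝ) : ℝ := -((1 - t) * Real.logb 2 (1 - t) + t * Real.logb 2 t)

noncomputable def mixw (K : ℕ) (t : ℝ) : Option (Fin (K+1) × Fin (K+1)) → ℝ :=
  fun ω => ω.elim (1 - t) (fun _ => t / ((K:ℝ)+1)^2)

lemma mixw_nonneg (K : ℕ) {t : ℝ} (ht0 : 0 ≤ t) (ht1 : t ≤ 1) :
    ∀ ω, 0 ≤ mixw K t ω := by
  intro ω
  cases ω with
  | none => simp only [mixw, Option.elim]; linarith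
  | some z => simp only [mixw, Option.elim]; positivity

lemma mixw_sum (K : ℕ) (t : ℝ) : ∑ ω, mixw K t ω = 1 := by
  rw [Fintype.sum_option]
  simp only [mixw, Option.elim]
  rw [Finset.sum_const, Finset.card_univ, Fintype.card_prod, Fintype.card_fin, nsmul_eq_mul]
  have hne : ((K:ℝ)+1)^2 ≠ 0 := by positivity
  push_cast
  field_simp
  ring

lemma pr_mix_none (K : ℕ) (t : ℝ) {γ : Type} [DecidableEq γ]
    (π : Fin (K+1) × Fin (K+1) → γ) :
    pr (mixw K t) (fun ω => Option.map π ω) none = 1 - t := by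
  unfold pr
  rw [Fintype.sum_option]
  simp [mixw]

lemma pr_mix_some (K : ℕ) (t : ℝ) {γ : Type} [DecidableEq γ]
    (π : Fin (K+1) × Fin (K+1) → γ) (d : ℕ)
    (hfib : ∀ c, (Finset.univ.filter (fun z => π z = c)).card = d) (c : γ) :
    pr (mixw K t) (fun ω => Option.map π ω) (some c) = d * (t / ((K:ℝ)+1)^2) := by
  unfold pr
  rw [Fintype.sum_option]
  simp only [Option.map_none, Option.map_some, mixw, Option.elim]
  rw [if_neg (by simp)]
  have : ∀ z, (if some (π z) = some c then t / ((K:ℝ)+1)^2 else 0)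
      = (if π z = c then t / ((K:ℝ)+1)^2 else 0) := by
    intro z; by_cases h : π z = c <;> simp [h]
  rw [Finset.sum_congr rfl (fun z _ => this z), ← Finset.sum_filter, Finset.sum_const,
    hfib c, nsmul_eq_mul]
  ring

lemma ent_mix (K : ℕ) {t : ℝ} (ht0 : 0 ≤ t) (ht1 : t ≤ 1) {γ : Type} [Fintype γ] [DecidableEq γ]
    (π : Fin (K+1) × Fin (K+1) → γ) (d : ℕ)
    (hfib : ∀ c, (Finset.univ.filter (fun z => π z = c)).card = d)
    (hcount : Fintype.card γ * d = (K+1) * (K+1)) :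
    ent (mixw K t) (fun ω => Option.map π ω) = Hb2 t + t * Real.logb 2 (Fintype.card γ) := by
  have hγpos : 0 < Fintype.card γ := by
    rcases Nat.eq_zero_or_pos (Fintype.card γ) with h | h
    · rw [h, zero_mul] at hcount
      exact absurd hcount.symm (Nat.mul_ne_zero (Nat.succ_ne_zero K) (Nat.succ_ne_zero K))
    · exact h
  have hγR : (0:ℝ) < (Fintype.card γ : ℝ) := by exact_mod_cast hγpos
  have hK2 : ((K:ℝ)+1)^2 ≠ 0 := by positivity
  have hdval : (d : ℝ) * (t / ((K:ℝ)+1)^2) = t / (Fintype.card γ : ℝ) := by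
    have h1 : ((Fintype.card γ : ℝ)) * d = ((K:ℝ)+1)^2 := by
      have := hcount
      have h2 : ((Fintype.card γ * d : ℕ) : ℝ) = (((K+1) * (K+1) : ℕ) : ℝ) := by
        exact_mod_cast congrArg (fun n : ℕ => (n:ℝ)) this
      push_cast at h2
      rw [h2]; ring
    have hd0 : (d:ℝ) ≠ 0 := fun h => hK2 (by rw [← h1, h, mul_zero])
    rw [← h1]
    field_simp
  rw [ent_eq_sum_univ, Fintype.sum_option]
  rw [pr_mix_none K t π]
  have hsome : ∀ c : γ, pr (mixw K t) (fun ω => Option.map π ω) (some c)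
      * Real.logb 2 (pr (mixw K t) (fun ω => Option.map π ω) (some c))
      = (t / (Fintype.card γ : ℝ)) * Real.logb 2 (t / (Fintype.card γ : ℝ)) := by
    intro c
    rw [pr_mix_some K t π d hfib c, hdval]
  rw [Finset.sum_congr rfl (fun c _ => hsome c), Finset.sum_const, Finset.card_univ,
    nsmul_eq_mul]
  have hkey : (Fintype.card γ : ℝ) * ((t / (Fintype.card γ : ℝ))
      * Real.logb 2 (t / (Fintype.card γ : ℝ)))
      = t * Real.logb 2 t - t * Real.logb 2 (Fintype.card γ : ℝ) := by
    rcases eq_or_ne t 0 with ht | ht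
    · simp [ht]
    · rw [Real.logb_div ht (ne_of_gt hγR)]
      field_simp
  rw [hkey]
  unfold Hb2
  ring

end Mix
section Mix2

def gi (K : ℕ) (i : Fin 4) : Fin (K+1) × Fin (K+1) → Fin (K+1) :=
  if i.val = 0 then Prod.fst else if i.val = 1 then Prod.snd
  else if i.val = 2 then (fun z => z.1 + z.2) else (fun _ => 0)

lemma gi0 (K : ℕ) : gi K 0 = Prod.fst := by unfold gi; norm_num
lemma gi1 (K : ℕ) : gi K 1 = Prod.snd := by unfold gi; norm_num
lemma gi2 (K : ℕ) : gi K 2 = fun z => z.1 + z.2 := by unfold gi; norm_num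
lemma gi3 (K : ℕ) : gi K 3 = fun _ => 0 := by
  unfold gi
  norm_num [show ((3:Fin 4)).val = 3 from rfl]

def mixX (K : ℕ) (ω : Option (Fin (K+1) × Fin (K+1))) (i : Fin 4) : Fin (K+2) :=
  (Option.map (gi K i) ω).elim 0 Fin.succ

def predd (K : ℕ) (v : Fin (K+2)) : Fin (K+1) :=
  if h : v = 0 then 0 else v.pred h

lemma predd_succ (K : ℕ) (j : Fin (K+1)) : predd K j.succ = j := by
  unfold predd
  rw [dif_neg (Fin.succ_ne_zero j), Fin.pred_succ]

lemma mix_ent_A (K : ℕ) {t : ℝ} (ht0 : 0 ≤ t) (ht1 : t ≤ 1)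
    {γ : Type} [Fintype γ] [DecidableEq γ]
    (A : Finset (Fin 4)) (hA : A.Nonempty)
    (π : Fin (K+1) × Fin (K+1) → γ) (d : ℕ)
    (hfib : ∀ c, (Finset.univ.filter (fun z => π z = c)).card = d)
    (hcount : Fintype.card γ * d = (K+1) * (K+1))
    (ι : γ → ((i : {x // x ∈ A}) → Fin (K+1))) (ι' : ((i : {x // x ∈ A}) → Fin (K+1)) → γ)
    (hinv : ∀ c, ι' (ι c) = c)
    (hcomp : ∀ z (i : {x // x ∈ A}), ι (π z) i = gi K i.1 z) :
    ent (mixw K t) (fun ω (i : {x // x ∈ A}) => mixX K ω i.1)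
      = Hb2 t + t * Real.logb 2 (Fintype.card γ) := by
  obtain ⟨i₀, hi₀⟩ := hA
  have step : ent (mixw K t) (fun ω (i : {x // x ∈ A}) => mixX K ω i.1)
      = ent (mixw K t) (fun ω => Option.map π ω) := by
    refine ent_congr (mixw K t) _ _
      (fun y => if y ⟨i₀, hi₀⟩ = 0 then none else some (ι' (fun i => predd K (y i))))
      (fun s (i : {x // x ∈ A}) => (Option.map (fun c => ι c i) s).elim 0 Fin.succ)
      (fun ω => ?_) (fun ω => ?_)
    · cases ω with
      | none =>
        simp [mixX]
      | some z =>
        simp only [mixX, Option.map_some, Option.elim]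
        simp only [Fin.succ_ne_zero, ↓reduceIte]
        congr 1
        have : (fun i : {x // x ∈ A} => predd K (Fin.succ (gi K i.1 z)))
            = ι (π z) := by
          funext i
          rw [predd_succ, ← hcomp z i]
        rw [this, hinv]
    · cases ω with
      | none =>
        funext i
        simp only [mixX, Option.map_none, Option.elim]
      | some z =>
        funext i
        simp only [mixX, Option.map_some, Option.elim]
        rw [hcomp z i]
  rw [step]
  exact ent_mix K ht0 ht1 π d hfib hcount

-- fiber cardinalities
lemma fib_fst (K : ℕ) (c : Fin (K+1)) :
    (Finset.univ.filter (fun z : Fin (K+1) × Fin (K+1) => z.1 = c)).card = K+1 := by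
  have : (Finset.univ.filter (fun z : Fin (K+1) × Fin (K+1) => z.1 = c))
      = {c} ×ˢ Finset.univ := by
    ext z
    rw [Finset.mem_filter, Finset.mem_product]
    simp
  rw [this, Finset.card_product]
  simp

lemma fib_snd (K : ℕ) (c : Fin (K+1)) :
    (Finset.univ.filter (fun z : Fin (K+1) × Fin (K+1) => z.2 = c)).card = K+1 := by
  have : (Finset.univ.filter (fun z : Fin (K+1) × Fin (K+1) => z.2 = c))
      = Finset.univ ×ˢ {c} := by
    ext z
    rw [Finset.mem_filter, Finset.mem_product]
    simp
  rw [this, Finset.card_product]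
  simp

lemma fib_add (K : ℕ) (c : Fin (K+1)) :
    (Finset.univ.filter (fun z : Fin (K+1) × Fin (K+1) => z.1 + z.2 = c)).card = K+1 := by
  have hcard : (Finset.univ.filter (fun z : Fin (K+1) × Fin (K+1) => z.1 + z.2 = c)).card
      = (Finset.univ : Finset (Fin (K+1))).card := by
    refine Finset.card_bij' (fun z _ => z.1) (fun x _ => (x, c - x)) ?_ ?_ ?_ ?_
    · intro z hz
      exact Finset.mem_univ _
    · intro x _
      rw [Finset.mem_filter]
      refine ⟨Finset.mem_univ _, ?_⟩
      show x + (c - x) = c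
      abel
    · intro z hz
      rw [Finset.mem_filter] at hz
      show (z.1, c - z.1) = z
      have h2 : z.2 = c - z.1 := eq_sub_of_add_eq' hz.2
      exact Prod.ext rfl h2.symm
    · intro x _
      rfl
  rw [hcard]
  simp

lemma fib_const (K : ℕ) (c : Fin 1) :
    (Finset.univ.filter (fun z : Fin (K+1) × Fin (K+1) => (0 : Fin 1) = c)).card
      = (K+1) * (K+1) := by
  have hc : c = 0 := Subsingleton.elim _ _
  subst hc
  rw [Finset.filter_true_of_mem (fun _ _ => rfl)]
  rw [Finset.card_univ, Fintype.card_prod, Fintype.card_fin]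

lemma fib_id (K : ℕ) (c : Fin (K+1) × Fin (K+1)) :
    (Finset.univ.filter (fun z : Fin (K+1) × Fin (K+1) => z = c)).card = 1 := by
  rw [Finset.filter_eq', if_pos (Finset.mem_univ c)]
  simp

end Mix2
section Mix3

lemma rkU_val (k : ℕ) (B A : Finset (Fin 4)) (c : ℕ) (h : (A ∩ B).card = c) :
    rkU k B A = min (k:ℝ) (c:ℝ) := by unfold rkU; rw [h]

lemma fin4_cases (A : Finset (Fin 4)) :
    A = ∅ ∨ A = {0} ∨ A = {1} ∨ A = {2} ∨ A = {3} ∨ A = {0,1} ∨ A = {0,2} ∨ A = {0,3}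
    ∨ A = {1,2} ∨ A = {1,3} ∨ A = {2,3} ∨ A = {0,1,2} ∨ A = {0,1,3} ∨ A = {0,2,3}
    ∨ A = {1,2,3} ∨ A = {0,1,2,3} := by revert A; decide

set_option maxHeartbeats 2000000 in
lemma mix_entropic (K : ℕ) {t : ℝ} (ht0 : 0 ≤ t) (ht1 : t ≤ 1) :
    IsEntropic 4 (fun A => (t * Real.logb 2 ((K:ℝ)+1)) * rkU 2 ({0,1,2} : Finset (Fin 4)) A
      + Hb2 t * rkU 1 (Finset.univ : Finset (Fin 4)) A) := by
  classical
  have hK1 : ((K:ℝ)+1) ≠ 0 := by positivity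
  have hcidf : ((Fintype.card (Fin (K+1)) : ℕ) : ℝ) = (K:ℝ)+1 := by
    rw [Fintype.card_fin]; push_cast; ring
  have hcidp : ((Fintype.card (Fin (K+1) × Fin (K+1)) : ℕ) : ℝ) = ((K:ℝ)+1) * ((K:ℝ)+1) := by
    rw [Fintype.card_prod, Fintype.card_fin]; push_cast; ring
  have hlogp : Real.logb 2 ((Fintype.card (Fin (K+1) × Fin (K+1)) : ℕ) : ℝ)
      = 2 * Real.logb 2 ((K:ℝ)+1) := by
    rw [hcidp, Real.logb_mul hK1 hK1]; ring
  have hlogf : Real.logb 2 ((Fintype.card (Fin (K+1)) : ℕ) : ℝ) = Real.logb 2 ((K:ℝ)+1) := by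
    rw [hcidf]
  have hlog1 : Real.logb 2 ((Fintype.card (Fin 1) : ℕ) : ℝ) = 0 := by
    simp
  apply isEntropic_of_model 4 _ (Option (Fin (K+1) × Fin (K+1))) (mixw K t)
    (mixw_nonneg K ht0 ht1) (mixw_sum K t) (fun _ => K+2) (mixX K)
  intro A
  rcases fin4_cases A with rfl|rfl|rfl|rfl|rfl|rfl|rfl|rfl|rfl|rfl|rfl|rfl|rfl|rfl|rfl|rfl
  · -- ∅
    show (t * Real.logb 2 ((K:ℝ)+1)) * rkU 2 {0,1,2} ∅ + Hb2 t * rkU 1 Finset.univ ∅ = _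
    rw [rkU_val 2 _ _ 0 (by decide), rkU_val 1 _ _ 0 (by decide)]
    haveI : IsEmpty {x // x ∈ (∅ : Finset (Fin 4))} := ⟨fun i => (Finset.notMem_empty i.1 i.2)⟩
    rw [(ent_of_subsingleton (mixw K t) _ (mixw_sum K t))]
    norm_num
  · -- {0}
    show (t * Real.logb 2 ((K:ℝ)+1)) * rkU 2 {0,1,2} {0} + Hb2 t * rkU 1 Finset.univ {0} = _
    rw [rkU_val 2 _ _ 1 (by decide), rkU_val 1 _ _ 1 (by decide)]
    rw [mix_ent_A K ht0 ht1 {0} ⟨0, by decide⟩ Prod.fst (K+1) (fib_fst K) (by simp)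
      (fun c _ => c) (fun y => y ⟨0, by decide⟩) (fun c => rfl) ?_]
    · rw [hlogf]; norm_num; ring
    · intro z i
      have h : i.1 ∈ ({0} : Finset (Fin 4)) := i.2
      rw [Finset.mem_singleton] at h
      rw [h, gi0]
  · -- {1}
    show (t * Real.logb 2 ((K:ℝ)+1)) * rkU 2 {0,1,2} {1} + Hb2 t * rkU 1 Finset.univ {1} = _
    rw [rkU_val 2 _ _ 1 (by decide), rkU_val 1 _ _ 1 (by decide)]
    rw [mix_ent_A K ht0 ht1 {1} ⟨1, by decide⟩ Prod.snd (K+1) (fib_snd K) (by simp)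
      (fun c _ => c) (fun y => y ⟨1, by decide⟩) (fun c => rfl) ?_]
    · rw [hlogf]; norm_num; ring
    · intro z i
      have h : i.1 ∈ ({1} : Finset (Fin 4)) := i.2
      rw [Finset.mem_singleton] at h
      rw [h, gi1]
  · -- {2}
    show (t * Real.logb 2 ((K:ℝ)+1)) * rkU 2 {0,1,2} {2} + Hb2 t * rkU 1 Finset.univ {2} = _
    rw [rkU_val 2 _ _ 1 (by decide), rkU_val 1 _ _ 1 (by decide)]
    rw [mix_ent_A K ht0 ht1 {2} ⟨2, by decide⟩ (fun z => z.1 + z.2) (K+1) (fib_add K) (by simp)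
      (fun c _ => c) (fun y => y ⟨2, by decide⟩) (fun c => rfl) ?_]
    · rw [hlogf]; norm_num; ring
    · intro z i
      have h : i.1 ∈ ({2} : Finset (Fin 4)) := i.2
      rw [Finset.mem_singleton] at h
      rw [h, gi2]
  · -- {3}
    show (t * Real.logb 2 ((K:ℝ)+1)) * rkU 2 {0,1,2} {3} + Hb2 t * rkU 1 Finset.univ {3} = _
    rw [rkU_val 2 _ _ 0 (by decide), rkU_val 1 _ _ 1 (by decide)]
    rw [mix_ent_A K ht0 ht1 {3} ⟨3, by decide⟩ (fun _ => (0 : Fin 1)) ((K+1)*(K+1))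
      (fib_const K) (by simp) (fun _ _ => 0) (fun _ => 0) (fun c => Subsingleton.elim _ _) ?_]
    · rw [hlog1]; norm_num
    · intro z i
      have h : i.1 ∈ ({3} : Finset (Fin 4)) := i.2
      rw [Finset.mem_singleton] at h
      rw [h, gi3]
  · -- {0,1}
    show (t * Real.logb 2 ((K:ℝ)+1)) * rkU 2 {0,1,2} {0,1} + Hb2 t * rkU 1 Finset.univ {0,1} = _
    rw [rkU_val 2 _ _ 2 (by decide), rkU_val 1 _ _ 2 (by decide)]
    rw [mix_ent_A K ht0 ht1 {0,1} ⟨0, by decide⟩ id 1 (fib_id K) (by simp)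
      (fun c i => gi K i.1 c) (fun y => (y ⟨0, by decide⟩, y ⟨1, by decide⟩)) ?_ (fun z i => rfl)]
    · rw [hlogp]; norm_num; ring
    · intro c
      show (gi K 0 c, gi K 1 c) = c
      rw [gi0, gi1]
  · -- {0,2}
    show (t * Real.logb 2 ((K:ℝ)+1)) * rkU 2 {0,1,2} {0,2} + Hb2 t * rkU 1 Finset.univ {0,2} = _
    rw [rkU_val 2 _ _ 2 (by decide), rkU_val 1 _ _ 2 (by decide)]
    rw [mix_ent_A K ht0 ht1 {0,2} ⟨0, by decide⟩ id 1 (fib_id K) (by simp)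
      (fun c i => gi K i.1 c)
      (fun y => (y ⟨0, by decide⟩, y ⟨2, by decide⟩ - y ⟨0, by decide⟩)) ?_ (fun z i => rfl)]
    · rw [hlogp]; norm_num; ring
    · intro c
      show (gi K 0 c, gi K 2 c - gi K 0 c) = c
      rw [gi0, gi2]
      refine Prod.ext rfl ?_
      show c.1 + c.2 - c.1 = c.2
      abel
  · -- {0,3}
    show (t * Real.logb 2 ((K:ℝ)+1)) * rkU 2 {0,1,2} {0,3} + Hb2 t * rkU 1 Finset.univ {0,3} = _
    rw [rkU_val 2 _ _ 1 (by decide), rkU_val 1 _ _ 2 (by decide)]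
    rw [mix_ent_A K ht0 ht1 {0,3} ⟨0, by decide⟩ Prod.fst (K+1) (fib_fst K) (by simp)
      (fun c i => if i.1.val = 3 then 0 else c) (fun y => y ⟨0, by decide⟩) (fun c => by simp) ?_]
    · rw [hlogf]; norm_num; ring
    · intro z i
      have h : i.1 ∈ ({0,3} : Finset (Fin 4)) := i.2
      rw [Finset.mem_insert, Finset.mem_singleton] at h
      rcases h with h | h
      · simp [h, gi0, show ((0:Fin 4)).val = 0 from rfl]
      · simp [h, gi3, show ((3:Fin 4)).val = 3 from rfl]
  · -- {1,2}
    show (t * Real.logb 2 ((K:ℝ)+1)) * rkU 2 {0,1,2} {1,2} + Hb2 t * rkU 1 Finset.univ {1,2} = _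
    rw [rkU_val 2 _ _ 2 (by decide), rkU_val 1 _ _ 2 (by decide)]
    rw [mix_ent_A K ht0 ht1 {1,2} ⟨1, by decide⟩ id 1 (fib_id K) (by simp)
      (fun c i => gi K i.1 c)
      (fun y => (y ⟨2, by decide⟩ - y ⟨1, by decide⟩, y ⟨1, by decide⟩)) ?_ (fun z i => rfl)]
    · rw [hlogp]; norm_num; ring
    · intro c
      show (gi K 2 c - gi K 1 c, gi K 1 c) = c
      rw [gi1, gi2]
      refine Prod.ext ?_ rfl
      show c.1 + c.2 - c.2 = c.1
      abel
  · -- {1,3}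
    show (t * Real.logb 2 ((K:ℝ)+1)) * rkU 2 {0,1,2} {1,3} + Hb2 t * rkU 1 Finset.univ {1,3} = _
    rw [rkU_val 2 _ _ 1 (by decide), rkU_val 1 _ _ 2 (by decide)]
    rw [mix_ent_A K ht0 ht1 {1,3} ⟨1, by decide⟩ Prod.snd (K+1) (fib_snd K) (by simp)
      (fun c i => if i.1.val = 3 then 0 else c) (fun y => y ⟨1, by decide⟩) (fun c => by simp) ?_]
    · rw [hlogf]; norm_num; ring
    · intro z i
      have h : i.1 ∈ ({1,3} : Finset (Fin 4)) := i.2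
      rw [Finset.mem_insert, Finset.mem_singleton] at h
      rcases h with h | h
      · simp [h, gi1, show ((1:Fin 4)).val = 1 from rfl]
      · simp [h, gi3, show ((3:Fin 4)).val = 3 from rfl]
  · -- {2,3}
    show (t * Real.logb 2 ((K:ℝ)+1)) * rkU 2 {0,1,2} {2,3} + Hb2 t * rkU 1 Finset.univ {2,3} = _
    rw [rkU_val 2 _ _ 1 (by decide), rkU_val 1 _ _ 2 (by decide)]
    rw [mix_ent_A K ht0 ht1 {2,3} ⟨2, by decide⟩ (fun z => z.1 + z.2) (K+1) (fib_add K) (by simp)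
      (fun c i => if i.1.val = 3 then 0 else c) (fun y => y ⟨2, by decide⟩) (fun c => by simp) ?_]
    · rw [hlogf]; norm_num; ring
    · intro z i
      have h : i.1 ∈ ({2,3} : Finset (Fin 4)) := i.2
      rw [Finset.mem_insert, Finset.mem_singleton] at h
      rcases h with h | h
      · simp [h, gi2, show ((2:Fin 4)).val = 2 from rfl]
      · simp [h, gi3, show ((3:Fin 4)).val = 3 from rfl]
  · -- {0,1,2}
    show (t * Real.logb 2 ((K:ℝ)+1)) * rkU 2 {0,1,2} {0,1,2}
      + Hb2 t * rkU 1 Finset.univ {0,1,2} = _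
    rw [rkU_val 2 _ _ 3 (by decide), rkU_val 1 _ _ 3 (by decide)]
    rw [mix_ent_A K ht0 ht1 {0,1,2} ⟨0, by decide⟩ id 1 (fib_id K) (by simp)
      (fun c i => gi K i.1 c) (fun y => (y ⟨0, by decide⟩, y ⟨1, by decide⟩)) ?_ (fun z i => rfl)]
    · rw [hlogp]; norm_num; ring
    · intro c
      show (gi K 0 c, gi K 1 c) = c
      rw [gi0, gi1]
  · -- {0,1,3}
    show (t * Real.logb 2 ((K:ℝ)+1)) * rkU 2 {0,1,2} {0,1,3}
      + Hb2 t * rkU 1 Finset.univ {0,1,3} = _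
    rw [rkU_val 2 _ _ 2 (by decide), rkU_val 1 _ _ 3 (by decide)]
    rw [mix_ent_A K ht0 ht1 {0,1,3} ⟨0, by decide⟩ id 1 (fib_id K) (by simp)
      (fun c i => gi K i.1 c) (fun y => (y ⟨0, by decide⟩, y ⟨1, by decide⟩)) ?_ (fun z i => rfl)]
    · rw [hlogp]; norm_num; ring
    · intro c
      show (gi K 0 c, gi K 1 c) = c
      rw [gi0, gi1]
  · -- {0,2,3}
    show (t * Real.logb 2 ((K:ℝ)+1)) * rkU 2 {0,1,2} {0,2,3}
      + Hb2 t * rkU 1 Finset.univ {0,2,3} = _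
    rw [rkU_val 2 _ _ 2 (by decide), rkU_val 1 _ _ 3 (by decide)]
    rw [mix_ent_A K ht0 ht1 {0,2,3} ⟨0, by decide⟩ id 1 (fib_id K) (by simp)
      (fun c i => gi K i.1 c)
      (fun y => (y ⟨0, by decide⟩, y ⟨2, by decide⟩ - y ⟨0, by decide⟩)) ?_ (fun z i => rfl)]
    · rw [hlogp]; norm_num; ring
    · intro c
      show (gi K 0 c, gi K 2 c - gi K 0 c) = c
      rw [gi0, gi2]
      refine Prod.ext rfl ?_
      show c.1 + c.2 - c.1 = c.2
      abel
  · -- {1,2,3}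
    show (t * Real.logb 2 ((K:ℝ)+1)) * rkU 2 {0,1,2} {1,2,3}
      + Hb2 t * rkU 1 Finset.univ {1,2,3} = _
    rw [rkU_val 2 _ _ 2 (by decide), rkU_val 1 _ _ 3 (by decide)]
    rw [mix_ent_A K ht0 ht1 {1,2,3} ⟨1, by decide⟩ id 1 (fib_id K) (by simp)
      (fun c i => gi K i.1 c)
      (fun y => (y ⟨2, by decide⟩ - y ⟨1, by decide⟩, y ⟨1, by decide⟩)) ?_ (fun z i => rfl)]
    · rw [hlogp]; norm_num; ring
    · intro c
      show (gi K 2 c - gi K 1 c, gi K 1 c) = c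
      rw [gi1, gi2]
      refine Prod.ext ?_ rfl
      show c.1 + c.2 - c.2 = c.1
      abel
  · -- {0,1,2,3}
    show (t * Real.logb 2 ((K:ℝ)+1)) * rkU 2 {0,1,2} {0,1,2,3}
      + Hb2 t * rkU 1 Finset.univ {0,1,2,3} = _
    rw [rkU_val 2 _ _ 3 (by decide), rkU_val 1 _ _ 4 (by decide)]
    rw [mix_ent_A K ht0 ht1 {0,1,2,3} ⟨0, by decide⟩ id 1 (fib_id K) (by simp)
      (fun c i => gi K i.1 c) (fun y => (y ⟨0, by decide⟩, y ⟨1, by decide⟩)) ?_ (fun z i => rfl)]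
    · rw [hlogp]; norm_num; ring
    · intro c
      show (gi K 0 c, gi K 1 c) = c
      rw [gi0, gi1]

end Mix3

section Final

lemma Hb2_zero : Hb2 0 = 0 := by unfold Hb2; simp

lemma Hb2_one : Hb2 1 = 0 := by unfold Hb2; simp

lemma Hb2_continuous : Continuous Hb2 := by
  have heq : Hb2 = fun t => (Real.negMulLog (1-t) + Real.negMulLog t) / Real.log 2 := by
    funext t
    unfold Hb2 Real.negMulLog Real.logb
    field_simp
    ring
  rw [heq]
  apply Continuous.div_const
  exact (Real.continuous_negMulLog.comp (continuous_const.sub continuous_id)).add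
    Real.continuous_negMulLog

lemma isEntropic_congr {n : ℕ} {h₁ h₂ : Finset (Fin n) → ℝ}
    (he : ∀ A, h₁ A = h₂ A) (H : IsEntropic n h₁) : IsEntropic n h₂ := by
  obtain ⟨m, p, h0, h1, h2⟩ := H
  exact ⟨m, p, h0, h1, fun A => (he A).symm.trans (h2 A)⟩


/-- Theorem 7: for the face (U^{123}_{2,3}, U_{1,4}),
h = a·r₁ + b·r₂ (a, b ≥ 0) is entropic iff b > 0, or b = 0 and a = log₂ k for
some positive integer k. -/
theorem face_U123_23_U14 (a b : ℝ) (ha : 0 ≤ a) (hb : 0 ≤ b) :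
    IsEntropic 4
      (fun A => a * rkU 2 ({0,1,2} : Finset (Fin 4)) A +
                b * rkU 1 (Finset.univ : Finset (Fin 4)) A)
    ↔ (0 < b ∨ (b = 0 ∧ ∃ k : ℕ, 0 < k ∧ a = Real.logb 2 k)) := by
  constructor
  · intro hE
    rcases lt_or_eq_of_le hb with hbpos | hb0
    · exact Or.inl hbpos
    · right
      refine ⟨hb0.symm, ?_⟩
      obtain ⟨m, p, hp, hp1, hent⟩ := hE
      refine forward_b0 p hp hp1 fun A => ?_
      have h := (hent A).symm
      rw [h]
      show a * rkU 2 ({0,1,2} : Finset (Fin 4)) A + b * rkU 1 (Finset.univ : Finset (Fin 4)) A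
        = a * rkU 2 ({0,1,2} : Finset (Fin 4)) A
      rw [← hb0]
      ring
  · intro hcase
    rcases hcase with hbpos | ⟨hb0, k, hkpos, hak⟩
    · rcases eq_or_lt_of_le ha with ha0 | hapos
      · -- a = 0
        have H := (mix_entropic 0 (le_refl (0:ℝ)) zero_le_one).add (shared_entropic b hb)
        apply isEntropic_congr _ H
        intro A
        show (0 * Real.logb 2 ((0:ℕ)+1)) * rkU 2 ({0,1,2} : Finset (Fin 4)) A
            + Hb2 0 * rkU 1 Finset.univ A + b * rkU 1 Finset.univ A = _
        rw [Hb2_zero, ← ha0]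
        ring
      · -- a > 0, b > 0
        have hL : Filter.Tendsto (fun KK : ℕ => Real.logb 2 ((KK:ℝ)+1))
            Filter.atTop Filter.atTop := by
          apply (Real.tendsto_logb_atTop one_lt_two).comp
          exact Filter.tendsto_atTop_add_const_right _ 1 tendsto_natCast_atTop_atTop
        have ht : Filter.Tendsto (fun KK : ℕ => a / Real.logb 2 ((KK:ℝ)+1))
            Filter.atTop (nhds 0) := Filter.Tendsto.div_atTop tendsto_const_nhds hL
        have hH : Filter.Tendsto (fun KK : ℕ => Hb2 (a / Real.logb 2 ((KK:ℝ)+1)))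
            Filter.atTop (nhds 0) := by
          have := (Hb2_continuous.tendsto 0).comp ht
          rwa [Hb2_zero] at this
        have h1 : ∀ᶠ KK : ℕ in Filter.atTop, Hb2 (a / Real.logb 2 ((KK:ℝ)+1)) < b :=
          hH.eventually_lt_const hbpos
        have h2 : ∀ᶠ KK : ℕ in Filter.atTop, a ≤ Real.logb 2 ((KK:ℝ)+1) :=
          hL.eventually_ge_atTop a
        have h3 : ∀ᶠ KK : ℕ in Filter.atTop, (1:ℝ) ≤ Real.logb 2 ((KK:ℝ)+1) :=
          hL.eventually_ge_atTop 1
        obtain ⟨KK, hKb, hKa, hK1⟩ := (h1.and (h2.and h3)).exists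
        set L := Real.logb 2 ((KK:ℝ)+1) with hLdef
        have hLpos : 0 < L := lt_of_lt_of_le zero_lt_one hK1
        set t := a / L with htdef
        have ht0' : 0 ≤ t := div_nonneg ha (le_of_lt hLpos)
        have ht1' : t ≤ 1 := (div_le_one hLpos).mpr hKa
        have htL : t * L = a := div_mul_cancel₀ a (ne_of_gt hLpos)
        have hbH : 0 ≤ b - Hb2 t := by linarith [hKb]
        have H := (mix_entropic KK ht0' ht1').add (shared_entropic (b - Hb2 t) hbH)
        apply isEntropic_congr _ H
        intro A
        show (t * Real.logb 2 ((KK:ℝ)+1)) * rkU 2 ({0,1,2} : Finset (Fin 4)) A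
            + Hb2 t * rkU 1 Finset.univ A + (b - Hb2 t) * rkU 1 Finset.univ A = _
        rw [← hLdef, htL]
        ring
    · -- b = 0, a = logb 2 k
      subst hb0
      obtain ⟨K, rfl⟩ : ∃ K, k = K + 1 := ⟨k - 1, (Nat.succ_pred_eq_of_pos hkpos).symm⟩
      have H := mix_entropic K zero_le_one (le_refl (1:ℝ))
      apply isEntropic_congr _ H
      intro A
      show (1 * Real.logb 2 ((K:ℝ)+1)) * rkU 2 ({0,1,2} : Finset (Fin 4)) A
          + Hb2 1 * rkU 1 Finset.univ A = _
      rw [Hb2_one, hak]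
      push_cast
      ring

end Final
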